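/- Let k be an algebraically closed field of characteristic p > 2, write k(x) for the field of rational functions over k, and let k(x^p) ⊆ k(x) denote the range of the k-algebra endomorphism of k(x) sending x to x^p. Let f, g ∈ k(x) be nonzero. If the images of the operators T_f and T_g are equal, i.e. {q·f′ − f·q′ : q ∈ k(x)} = {q·g′ − g·q′ : q ∈ k(x)}, then there exists β ∈ k(x^p) with f = β·g. -/

import Mathlib

open Polynomial IntermediateField

/-- A subfield of `RatFunc k` containing all constants and `X` is everything. -/
lemma ratFunc_subfield_top {k : Type*} [Field k] (S : Subfield (RatFunc k))
    (hc : ∀ c : k, algebraMap k (RatFunc k) c ∈ S) (hX : RatFunc.X ∈ S) :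
    ∀ y : RatFunc k, y ∈ S := by
  have hpoly : ∀ P : Polynomial k, algebraMap (Polynomial k) (RatFunc k) P ∈ S := by
    intro P
    induction P using Polynomial.induction_on' with
    | add p q hp hq => rw [map_add]; exact S.add_mem hp hq
    | monomial n a =>
      have : (Polynomial.monomial n a : Polynomial k) = Polynomial.C a * Polynomial.X ^ n := by
        rw [Polynomial.C_mul_X_pow_eq_monomial]
      rw [this, map_mul, map_pow, RatFunc.algebraMap_X]
      refine S.mul_mem ?_ (S.pow_mem hX n)
      have : algebraMap (Polynomial k) (RatFunc k) (Polynomial.C a)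
          = algebraMap k (RatFunc k) a := by
        rw [IsScalarTower.algebraMap_apply k (Polynomial k) (RatFunc k)]
        rfl
      rw [this]; exact hc a
  intro y
  induction y using RatFunc.induction_on with
  | f p q hq => exact S.div_mem (hpoly p) (hpoly q)

/-- If `w^p` lies in the base field but `w` doesn't, in char `p`, then the minimal
polynomial of `w` has degree `p`. -/
lemma minpoly_natDegree_of_pow_mem {F L : Type*} [Field F] [Field L] [Algebra F L]
    {p : ℕ} [Fact p.Prime] [CharP L p] {w : L}
    (h1 : w ^ p ∈ Set.range (algebraMap F L)) (h2 : w ∉ Set.range (algebraMap F L)) :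
    IsIntegral F w ∧ (minpoly F w).natDegree = p := by
  haveI : CharP F p := (algebraMap F L).charP (algebraMap F L).injective p
  have hp : p.Prime := Fact.out
  obtain ⟨a, ha⟩ := h1
  have hmonic : (Polynomial.X ^ p - Polynomial.C a : Polynomial F).Monic :=
    Polynomial.monic_X_pow_sub_C a hp.ne_zero
  have haev : Polynomial.aeval w (Polynomial.X ^ p - Polynomial.C a : Polynomial F) = 0 := by
    simp [ha]
  have hint : IsIntegral F w := ⟨_, hmonic, haev⟩
  refine ⟨hint, ?_⟩
  have hdvd : minpoly F w ∣ Polynomial.X ^ p - Polynomial.C a := minpoly.dvd F w haev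
  have hmapdvd : (minpoly F w).map (algebraMap F L) ∣ (Polynomial.X - Polynomial.C w) ^ p := by
    have : (Polynomial.X ^ p - Polynomial.C a : Polynomial F).map (algebraMap F L)
        = (Polynomial.X - Polynomial.C w) ^ p := by
      rw [Polynomial.map_sub, Polynomial.map_pow, Polynomial.map_X, Polynomial.map_C, ha,
        sub_pow_char]
      simp
    exact this ▸ Polynomial.map_dvd (algebraMap F L) hdvd
  obtain ⟨i, hip, hassoc⟩ := (dvd_prime_pow (Polynomial.prime_X_sub_C w) p).mp hmapdvd
  have hmin_monic : (minpoly F w).Monic := minpoly.monic hint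
  have heq : (minpoly F w).map (algebraMap F L) = (Polynomial.X - Polynomial.C w) ^ i :=
    Polynomial.eq_of_monic_of_associated (hmin_monic.map _)
      ((Polynomial.monic_X_sub_C w).pow i) hassoc
  have hdeg : (minpoly F w).natDegree = i := by
    have := congrArg Polynomial.natDegree heq
    rwa [Polynomial.natDegree_map, Polynomial.natDegree_pow, Polynomial.natDegree_X_sub_C,
      mul_one] at this
  rw [hdeg]
  by_contra hne
  have hilt : i < p := lt_of_le_of_ne hip hne
  have hipos : 0 < i := hdeg ▸ minpoly.natDegree_pos hint
  -- coefficient of degree i-1 of (X - C w)^i is -(i : L) * w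
  have hcoeff : ((Polynomial.X - Polynomial.C w) ^ i).coeff (i - 1) = -(i : L) * w := by
    have : (Polynomial.X - Polynomial.C w) = (Polynomial.X + Polynomial.C (-w)) := by
      rw [map_neg, sub_eq_add_neg]
    rw [this, Polynomial.coeff_X_add_C_pow]
    have h1 : i - (i - 1) = 1 := by omega
    have h2 : i.choose (i - 1) = i := by
      have hsymm := Nat.choose_symm (n := i) (k := i - 1) (by omega)
      rw [h1] at hsymm
      rw [← hsymm, Nat.choose_one_right]
    rw [h1, h2, pow_one]
    ring
  have hmem : -(i : L) * w ∈ Set.range (algebraMap F L) := by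
    refine ⟨(minpoly F w).coeff (i - 1), ?_⟩
    have := congrArg (fun P => Polynomial.coeff P (i - 1)) heq
    simpa [Polynomial.coeff_map, hcoeff] using this
  have hine : (i : L) ≠ 0 := by
    rw [Ne, CharP.cast_eq_zero_iff L p i]
    intro hdvd'
    exact absurd (Nat.le_of_dvd hipos hdvd') (by omega)
  obtain ⟨b, hb⟩ := hmem
  refine h2 ⟨(-(i : F))⁻¹ * b, ?_⟩
  have hiF : ((-(i : F))⁻¹ : F) ≠ 0 := by
    simp only [ne_eq, inv_eq_zero, neg_eq_zero]
    intro h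
    exact hine (by rw [← map_natCast (algebraMap F L) i, h, map_zero])
  rw [map_mul, hb, map_inv₀, map_neg, map_natCast]
  field_simp

/-- In characteristic `p > 2`, if the operators `T_f(q) = q·f′ − f·q′` and
`T_g(q) = q·g′ − g·q′` on `k(x)` (for nonzero `f, g ∈ k(x)`) have the same image, then
`f = β·g` for some `β` in `k(x^p)`, the range of the `k`-algebra endomorphism of `k(x)`
sending `x` to `x^p`.  The derivative `′` is the unique `k`-derivation `D` on `k(x)`
with `D x = 1`. -/
theorem equal_images_implies_proportional
    (k : Type*) [Field k] [IsAlgClosed k] (p : ℕ) (hp : 2 < p) [CharP k p]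
    (φ : RatFunc k →ₐ[k] RatFunc k) (hφ : φ RatFunc.X = RatFunc.X ^ p)
    (D : Derivation k (RatFunc k) (RatFunc k)) (hD : D RatFunc.X = 1)
    (f g : RatFunc k) (hf : f ≠ 0) (hg : g ≠ 0)
    (him : {y : RatFunc k | ∃ q : RatFunc k, y = q * D f - f * D q}
         = {y : RatFunc k | ∃ q : RatFunc k, y = q * D g - g * D q}) :
    ∃ β ∈ Set.range φ, f = β * g := by
  haveI : NeZero p := ⟨by omega⟩
  haveI hfact : Fact p.Prime := CharP.char_is_prime_of_pos k p
  have hprime : p.Prime := hfact.out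
  have hodd : Odd p := hprime.odd_of_ne_two (by omega)
  haveI : CharP (RatFunc k) p :=
    charP_of_injective_algebraMap (algebraMap k (RatFunc k)).injective p
  set K : IntermediateField k (RatFunc k) := φ.fieldRange with hK
  have hconst : ∀ c : k, algebraMap k (RatFunc k) c ∈ K := fun c =>
    ⟨algebraMap k (RatFunc k) c, φ.commutes c⟩
  have hXp : RatFunc.X ^ p ∈ K := ⟨RatFunc.X, hφ⟩
  -- every p-th power is in K
  have hpow : ∀ y : RatFunc k, y ^ p ∈ K := by
    set S : Subfield (RatFunc k) :=
      { carrier := {y : RatFunc k | y ^ p ∈ K}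
        mul_mem' := fun {a b} ha hb => by
          simp only [Set.mem_setOf_eq, mul_pow] at *
          exact K.mul_mem ha hb
        one_mem' := by simp only [Set.mem_setOf_eq, one_pow]; exact K.one_mem
        add_mem' := fun {a b} ha hb => by
          simp only [Set.mem_setOf_eq, add_pow_char] at *
          exact K.add_mem ha hb
        zero_mem' := by
          simp only [Set.mem_setOf_eq, zero_pow hprime.ne_zero]; exact K.zero_mem
        neg_mem' := fun {a} ha => by
          simp only [Set.mem_setOf_eq, hodd.neg_pow] at *
          exact K.neg_mem ha
        inv_mem' := fun a ha => by
          simp only [Set.mem_setOf_eq, inv_pow] at *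
          exact K.inv_mem ha } with hS
    intro y
    refine ratFunc_subfield_top S (fun c => ?_) ?_ y
    · show (algebraMap k (RatFunc k) c) ^ p ∈ K
      rw [← map_pow]
      exact hconst _
    · exact hXp
  -- K is in the kernel of D
  have hker : ∀ y ∈ K, D y = 0 := by
    have key : ∀ r : RatFunc k, D (φ r) = 0 := by
      set S : Subfield (RatFunc k) :=
        { carrier := {r : RatFunc k | D (φ r) = 0}
          mul_mem' := fun {a b} ha hb => by
            simp only [Set.mem_setOf_eq, map_mul, Derivation.leibniz, smul_eq_mul] at *
            rw [ha, hb]; ring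
          one_mem' := by simp only [Set.mem_setOf_eq, map_one]; exact D.map_one_eq_zero
          add_mem' := fun {a b} ha hb => by
            simp only [Set.mem_setOf_eq, map_add] at *
            rw [ha, hb, add_zero]
          zero_mem' := by simp
          neg_mem' := fun {a} ha => by
            simp only [Set.mem_setOf_eq, map_neg, Derivation.map_neg] at *
            rw [ha, neg_zero]
          inv_mem' := fun a ha => by
            simp only [Set.mem_setOf_eq, map_inv₀, Derivation.leibniz_inv, smul_eq_mul] at *
            rw [ha]; ring } with hS
      intro r
      refine ratFunc_subfield_top S (fun c => ?_) ?_ r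
      · show D (φ (algebraMap k (RatFunc k) c)) = 0
        rw [φ.commutes c]; exact D.map_algebraMap c
      · show D (φ RatFunc.X) = 0
        rw [hφ, Derivation.leibniz_pow, hD]
        simp [nsmul_eq_mul, CharP.cast_eq_zero]
    rintro y ⟨r, rfl⟩
    exact key r
  -- setup u
  set u : RatFunc k := f * g⁻¹ with hu_def
  have hu : u ≠ 0 := mul_ne_zero hf (inv_ne_zero hg)
  have hfu : f = u * g := by rw [hu_def, mul_assoc, inv_mul_cancel₀ hg, mul_one]
  suffices hmem : u ∈ K by
    obtain ⟨r, hr⟩ := hmem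
    exact ⟨u, ⟨r, hr⟩, hfu⟩
  by_cases hX : RatFunc.X ∈ K
  · exact (IntermediateField.mem_toSubfield K u).mp
      (ratFunc_subfield_top K.toSubfield
        (fun c => (IntermediateField.mem_toSubfield K _).mpr (hconst c))
        ((IntermediateField.mem_toSubfield K _).mpr hX) u)
  -- main case
  have hrange : Set.range (algebraMap ↥K (RatFunc k)) = (K : Set (RatFunc k)) := by
    ext y
    constructor
    · rintro ⟨⟨z, hz⟩, rfl⟩
      simpa using hz
    · intro hy
      exact ⟨⟨y, hy⟩, rfl⟩
  haveI : CharP ↥K p := (algebraMap ↥K (RatFunc k)).charP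
    (algebraMap ↥K (RatFunc k)).injective p
  have hmemr : ∀ y : RatFunc k, y ∈ Set.range (algebraMap ↥K (RatFunc k)) ↔ y ∈ K := by
    intro y; rw [hrange]; rfl
  obtain ⟨hXint, hXdeg⟩ := minpoly_natDegree_of_pow_mem (p := p) (F := ↥K)
    (w := RatFunc.X) ((hmemr _).mpr hXp) (fun h => hX ((hmemr _).mp h))
  -- adjoin K X = ⊤
  have hadj : IntermediateField.adjoin ↥K {(RatFunc.X : RatFunc k)} = ⊤ := by
    rw [eq_top_iff]
    intro y _
    refine ratFunc_subfield_top (IntermediateField.adjoin ↥K {(RatFunc.X : RatFunc k)}).toSubfield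
      (fun c => ?_) ?_ y
    · have : algebraMap k (RatFunc k) c
          = algebraMap ↥K (RatFunc k) ⟨algebraMap k (RatFunc k) c, hconst c⟩ := rfl
      rw [this]
      exact (IntermediateField.adjoin ↥K {(RatFunc.X : RatFunc k)}).algebraMap_mem _
    · exact IntermediateField.subset_adjoin _ _ rfl
  haveI hfd : FiniteDimensional ↥K (RatFunc k) := by
    haveI := IntermediateField.adjoin.finiteDimensional hXint
    rw [hadj] at this
    exact (IntermediateField.topEquiv (F := ↥K) (E := RatFunc k)).toLinearEquiv.finiteDimensional
  have hfinrank : Module.finrank ↥K (RatFunc k) = p := by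
    rw [← IntermediateField.finrank_top' (F := ↥K) (E := RatFunc k), ← hadj,
      IntermediateField.adjoin.finrank hXint, hXdeg]
  -- the key image property
  have hstep : ∀ s : RatFunc k, ∃ t : RatFunc k, u ^ 2 * D s = D t := by
    intro s
    have h1 : (s * f) * D f - f * D (s * f) ∈
        {y : RatFunc k | ∃ q : RatFunc k, y = q * D f - f * D q} := ⟨s * f, rfl⟩
    rw [him] at h1
    obtain ⟨q, hq⟩ := h1
    refine ⟨q * g⁻¹, ?_⟩
    have hq' : -(f ^ 2) * D s = q * D g - g * D q := by
      rw [← hq, Derivation.leibniz, smul_eq_mul, smul_eq_mul]; ring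
    rw [Derivation.leibniz, Derivation.leibniz_inv, smul_eq_mul, smul_eq_mul, smul_eq_mul]
    rw [hu_def]
    have hinv : g⁻¹ * g = 1 := inv_mul_cancel₀ hg
    linear_combination (-(g⁻¹ ^ 2)) * hq' + (g⁻¹ * D q) * hinv
  -- u^2 ∈ K
  have hu2 : u ^ 2 ∈ K := by
    by_contra hu2n
    have hu2p : (u ^ 2) ^ p ∈ K := by
      rw [← pow_mul, mul_comm 2 p, pow_mul]
      exact K.pow_mem (hpow u) 2
    obtain ⟨hu2int, hu2deg⟩ := minpoly_natDegree_of_pow_mem (p := p) (F := ↥K)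
      (w := u ^ 2) ((hmemr _).mpr hu2p) (fun h => hu2n ((hmemr _).mp h))
    -- adjoin K {u^2} = ⊤
    have hadj2 : IntermediateField.adjoin ↥K {(u ^ 2 : RatFunc k)} = ⊤ := by
      have hfr : Module.finrank ↥K ↥(IntermediateField.adjoin ↥K {(u ^ 2 : RatFunc k)})
          = Module.finrank ↥K (RatFunc k) := by
        rw [IntermediateField.adjoin.finrank hu2int, hu2deg, hfinrank]
      have hsub : Subalgebra.toSubmodule (IntermediateField.adjoin ↥K {(u ^ 2 : RatFunc k)}).toSubalgebra
          = ⊤ := by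
        apply Submodule.eq_top_of_finrank_eq
        rw [Subalgebra.finrank_toSubmodule]
        exact hfr
      rw [eq_top_iff]
      intro y _
      have : y ∈ Subalgebra.toSubmodule (IntermediateField.adjoin ↥K {(u ^ 2 : RatFunc k)}).toSubalgebra := by
        rw [hsub]; trivial
      exact this
    have halgadj : ∀ y : RatFunc k, y ∈ Algebra.adjoin ↥K {(u ^ 2 : RatFunc k)} := by
      intro y
      rw [← IntermediateField.adjoin_simple_toSubalgebra_of_isAlgebraic hu2int.isAlgebraic]
      rw [hadj2]
      trivial
    -- range D is stable under multiplication by everything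
    have hDmul : ∀ y : RatFunc k, ∀ h ∈ Set.range ⇑D, y * h ∈ Set.range ⇑D := by
      intro y
      have hy := halgadj y
      induction hy using Algebra.adjoin_induction with
      | mem x hx =>
        rintro h ⟨s, rfl⟩
        rw [Set.mem_singleton_iff] at hx
        subst hx
        obtain ⟨t, ht⟩ := hstep s
        exact ⟨t, ht.symm⟩
      | algebraMap r =>
        rintro h ⟨s, rfl⟩
        refine ⟨algebraMap ↥K (RatFunc k) r * s, ?_⟩
        rw [Derivation.leibniz, smul_eq_mul, smul_eq_mul,
          hker _ ((hmemr _).mp ⟨r, rfl⟩)]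
        ring
      | add x y hx hy ihx ihy =>
        intro h hh
        obtain ⟨s, hs⟩ := ihx h hh
        obtain ⟨t, ht⟩ := ihy h hh
        exact ⟨s + t, by rw [map_add, hs, ht]; ring⟩
      | mul x y hx hy ihx ihy =>
        intro h hh
        have h1 := ihy h hh
        have h2 := ihx _ h1
        rwa [← mul_assoc] at h2
    have hone : (1 : RatFunc k) ∈ Set.range ⇑D := ⟨RatFunc.X, hD⟩
    have hsurj : Function.Surjective ⇑D := by
      intro y
      obtain ⟨s, hs⟩ := hDmul y 1 hone
      exact ⟨s, by rw [hs, mul_one]⟩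
    -- D as a K-linear map
    let Dlin : RatFunc k →ₗ[↥K] RatFunc k :=
      { toFun := ⇑D
        map_add' := fun x y => D.map_add x y
        map_smul' := fun c y => by
          simp only [RingHom.id_apply]
          rw [Algebra.smul_def, Algebra.smul_def, Derivation.leibniz, smul_eq_mul, smul_eq_mul,
            hker _ ((hmemr _).mp ⟨c, rfl⟩)]
          ring }
    have hinj : Function.Injective Dlin :=
      LinearMap.injective_iff_surjective.mpr hsurj
    have : (1 : RatFunc k) = 0 := by
      apply hinj
      show D 1 = D 0
      rw [D.map_one_eq_zero, D.map_zero]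
    exact one_ne_zero this
  -- conclude u ∈ K
  obtain ⟨m, hm⟩ := hodd
  have hueq : u = u ^ p * ((u ^ 2) ^ m)⁻¹ := by
    rw [← pow_mul, hm, pow_add, pow_one, pow_mul]
    field_simp
  rw [hueq]
  exact K.mul_mem (hpow u) (K.inv_mem (K.pow_mem hu2 m))
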